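/- Let R : ℝ → ℝ and R̃ : ℝ → ℝ be differentiable functions with R(t) > 0 and R̃(t) > 0 for all t ∈ ℝ, satisfying the mutual-synchronization identities R̃(t) = R(t − R̃(t)) and R(t) = R̃(t − R(t)) for all t ∈ ℝ. Then there is a constant R₀ > 0 such that R(t) = R₀ and R̃(t) = R₀ for all t ∈ ℝ. (Proposition 3 of the paper: two mutually Einstein-synchroneous clocks assign to each other one and the same constant radar distance.) -/

import Mathlib

private lemma exists_step (g w : ℝ) (hg : 0 < g) (hw : 0 ≤ w) :
    ∃ k : ℕ, w < k * g ∧ k * g ≤ w + g := by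
  refine ⟨⌊w / g⌋₊ + 1, ?_, ?_⟩
  · have h1 : w / g < (⌊w / g⌋₊ : ℝ) + 1 := Nat.lt_floor_add_one _
    have h2 : w < ((⌊w / g⌋₊ : ℝ) + 1) * g := by
      rw [← div_lt_iff₀ hg]; exact h1
    push_cast
    linarith
  · have h2 : (⌊w / g⌋₊ : ℝ) ≤ w / g := Nat.floor_le (by positivity)
    have h3 : (⌊w / g⌋₊ : ℝ) * g ≤ w := by
      rw [← le_div_iff₀ hg]; exact h2
    push_cast
    linarith

private lemma nat_comb_dense (α β u δ : ℝ) (hα : 0 < α) (hβ : 0 < β)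
    (hirr : Irrational (β / α)) (hδ : 0 < δ) :
    ∃ n m : ℕ, u < n * α - m * β ∧ n * α - m * β < u + δ := by
  rcases (AddSubgroup.closure ({α, β} : Set ℝ)).dense_or_cyclic with hd | ⟨a, ha⟩
  · -- dense case
    have hne : (Set.Ioo (0:ℝ) (min δ (min α β))).Nonempty := by
      refine ⟨min δ (min α β) / 2, ?_, ?_⟩
      · have : 0 < min δ (min α β) := lt_min hδ (lt_min hα hβ)
        linarith
      · have : 0 < min δ (min α β) := lt_min hδ (lt_min hα hβ)
        linarith
    obtain ⟨g, hgS, hg0, hglt⟩ := hd.exists_mem_open isOpen_Ioo hne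
    have hgδ : g < δ := lt_of_lt_of_le hglt (min_le_left _ _)
    have hgα : g < α := lt_of_lt_of_le hglt ((min_le_right _ _).trans (min_le_left _ _))
    have hgβ : g < β := lt_of_lt_of_le hglt ((min_le_right _ _).trans (min_le_right _ _))
    rw [SetLike.mem_coe, AddSubgroup.mem_closure_pair] at hgS
    obtain ⟨i, j, hij⟩ := hgS
    have hij' : (i : ℝ) * α + (j : ℝ) * β = g := by
      rw [← hij]; simp [zsmul_eq_mul]
    -- sign analysis
    rcases lt_trichotomy i 0 with hi | hi | hi <;> rcases lt_trichotomy j 0 with hj | hj | hj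
    · -- i<0, j<0 : g ≤ 0, contradiction
      exfalso
      have hi' : (i : ℝ) ≤ -1 := by exact_mod_cast Int.le_of_lt_add_one (by omega : i < -1 + 1)
      have hj' : (j : ℝ) ≤ -1 := by exact_mod_cast Int.le_of_lt_add_one (by omega : j < -1 + 1)
      nlinarith
    · exfalso
      subst hj
      have hi' : (i : ℝ) ≤ -1 := by exact_mod_cast Int.le_of_lt_add_one (by omega : i < -1 + 1)
      simp at hij'
      nlinarith
    · -- Case B : i < 0 < j : g = m₀ β - n₀ α
      have hi' : (i : ℝ) ≤ -1 := by exact_mod_cast Int.le_of_lt_add_one (by omega : i < -1 + 1)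
      have hj' : (1 : ℝ) ≤ (j : ℝ) := by exact_mod_cast hj
      set n₀ := (-i).toNat with hn₀
      set m₀ := j.toNat with hm₀
      have hn₀' : (n₀ : ℝ) = -(i : ℝ) := by
        rw [hn₀]; exact_mod_cast Int.toNat_of_nonneg (by omega : (0:ℤ) ≤ -i)
      have hm₀' : (m₀ : ℝ) = (j : ℝ) := by
        rw [hm₀]; exact_mod_cast Int.toNat_of_nonneg (by omega : (0:ℤ) ≤ j)
      have hrep : (m₀ : ℝ) * β - (n₀ : ℝ) * α = g := by
        rw [hm₀', hn₀']; linarith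
      set N := ⌊(u + δ) / α⌋₊ + 1 with hN
      have hNα : u + δ < (N : ℝ) * α := by
        have h1 : (u + δ) / α < (⌊(u + δ) / α⌋₊ : ℝ) + 1 := Nat.lt_floor_add_one _
        have : u + δ < ((⌊(u + δ) / α⌋₊ : ℝ) + 1) * α := by
          rw [← div_lt_iff₀ hα]; exact h1
        push_cast [hN]
        linarith
      obtain ⟨k, hk1, hk2⟩ := exists_step g ((N : ℝ) * α - (u + δ)) hg0 (by linarith)
      refine ⟨N + k * n₀, k * m₀, ?_, ?_⟩
      · have hval : ((N + k * n₀ : ℕ) : ℝ) * α - ((k * m₀ : ℕ) : ℝ) * β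
            = (N : ℝ) * α - (k : ℝ) * g := by
          rw [← hrep]; push_cast; ring
        rw [hval]; linarith
      · have hval : ((N + k * n₀ : ℕ) : ℝ) * α - ((k * m₀ : ℕ) : ℝ) * β
            = (N : ℝ) * α - (k : ℝ) * g := by
          rw [← hrep]; push_cast; ring
        rw [hval]; linarith
    · exfalso
      subst hi
      simp at hij'
      have hj' : (j : ℝ) ≤ -1 := by exact_mod_cast Int.le_of_lt_add_one (by omega : j < -1 + 1)
      nlinarith
    · exfalso; subst hi; subst hj; simp at hij'; linarith
    · exfalso
      subst hi
      simp at hij'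
      have hj' : (1 : ℝ) ≤ (j : ℝ) := by exact_mod_cast hj
      nlinarith
    · -- Case A : j < 0 < i : g = n₀ α - m₀ β
      have hi' : (1 : ℝ) ≤ (i : ℝ) := by exact_mod_cast hi
      have hj' : (j : ℝ) ≤ -1 := by exact_mod_cast Int.le_of_lt_add_one (by omega : j < -1 + 1)
      set n₀ := i.toNat with hn₀
      set m₀ := (-j).toNat with hm₀
      have hn₀' : (n₀ : ℝ) = (i : ℝ) := by
        rw [hn₀]; exact_mod_cast Int.toNat_of_nonneg (by omega : (0:ℤ) ≤ i)
      have hm₀' : (m₀ : ℝ) = -(j : ℝ) := by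
        rw [hm₀]; exact_mod_cast Int.toNat_of_nonneg (by omega : (0:ℤ) ≤ -j)
      have hrep : (n₀ : ℝ) * α - (m₀ : ℝ) * β = g := by
        rw [hn₀', hm₀']; linarith
      set N := ⌊(-u) / β⌋₊ + 1 with hN
      have hNβ : -u < (N : ℝ) * β := by
        have h1 : (-u) / β < (⌊(-u) / β⌋₊ : ℝ) + 1 := Nat.lt_floor_add_one _
        have : -u < ((⌊(-u) / β⌋₊ : ℝ) + 1) * β := by
          rw [← div_lt_iff₀ hβ]; exact h1
        push_cast [hN]
        linarith
      obtain ⟨k, hk1, hk2⟩ := exists_step g (u + (N : ℝ) * β) hg0 (by linarith)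
      refine ⟨k * n₀, k * m₀ + N, ?_, ?_⟩
      · have hval : ((k * n₀ : ℕ) : ℝ) * α - ((k * m₀ + N : ℕ) : ℝ) * β
            = (k : ℝ) * g - (N : ℝ) * β := by
          rw [← hrep]; push_cast; ring
        rw [hval]; linarith
      · have hval : ((k * n₀ : ℕ) : ℝ) * α - ((k * m₀ + N : ℕ) : ℝ) * β
            = (k : ℝ) * g - (N : ℝ) * β := by
          rw [← hrep]; push_cast; ring
        rw [hval]; linarith
    · exfalso
      have hi' : (1 : ℝ) ≤ (i : ℝ) := by exact_mod_cast hi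
      subst hj; simp at hij'
      nlinarith
    · exfalso
      have hi' : (1 : ℝ) ≤ (i : ℝ) := by exact_mod_cast hi
      have hj' : (1 : ℝ) ≤ (j : ℝ) := by exact_mod_cast hj
      nlinarith
  · -- cyclic case : contradiction with irrationality
    exfalso
    have hαS : α ∈ AddSubgroup.closure ({α, β} : Set ℝ) :=
      AddSubgroup.subset_closure (by simp)
    have hβS : β ∈ AddSubgroup.closure ({α, β} : Set ℝ) :=
      AddSubgroup.subset_closure (by simp)
    rw [ha, AddSubgroup.mem_closure_singleton] at hαS hβS
    obtain ⟨p, hp⟩ := hαS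
    obtain ⟨q, hq⟩ := hβS
    have hp' : (p : ℝ) * a = α := by rw [← hp]; simp [zsmul_eq_mul]
    have hq' : (q : ℝ) * a = β := by rw [← hq]; simp [zsmul_eq_mul]
    have ha0 : a ≠ 0 := by
      rintro rfl; simp at hp'; linarith
    have hp0 : (p : ℝ) ≠ 0 := by
      rintro h; rw [h] at hp'; simp at hp'; linarith
    have hratio : β / α = (q : ℝ) / (p : ℝ) := by
      rw [← hp', ← hq', mul_div_mul_right _ _ ha0]
    apply hirr
    exact ⟨(q : ℚ) / (p : ℚ), by push_cast; rw [hratio]⟩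

/-- Proposition 3 of the paper: if each of two non-intersecting clocks is Einstein
synchroneous to the other, then the radar distances `R` and `R̃` they assign to each
other are one and the same positive constant. Stated in purely real-analytic form. -/
theorem mutual_synchronization_constant_distance
    (R Rt : ℝ → ℝ)
    (hR : Differentiable ℝ R) (hRt : Differentiable ℝ Rt)
    (hRpos : ∀ t : ℝ, R t > 0) (hRtpos : ∀ t : ℝ, Rt t > 0)
    (hsync₁ : ∀ t : ℝ, Rt t = R (t - Rt t))
    (hsync₂ : ∀ t : ℝ, R t = Rt (t - R t)) :
    ∃ R₀ : ℝ, R₀ > 0 ∧ (∀ t : ℝ, R t = R₀) ∧ (∀ t : ℝ, Rt t = R₀) := by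
  -- one-step orbit identity
  have step : ∀ t : ℝ, R (t - R t - R t) = R t := by
    intro t
    have h1 := hsync₂ t
    have h2 := hsync₁ (t - R t)
    rw [← h1] at h2
    exact h2.symm
  -- n-step orbit identity
  have orbit : ∀ (n : ℕ) (t : ℝ), R (t - 2 * (n : ℝ) * R t) = R t := by
    intro n
    induction n with
    | zero => intro t; norm_num
    | succ n ih =>
      intro t
      have h := step (t - 2 * (n : ℝ) * R t)
      rw [ih t] at h
      have harg : t - 2 * ((n : ℕ) + 1 : ℕ) * R t = t - 2 * (n : ℝ) * R t - R t - R t := by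
        push_cast; ring
      rw [harg]
      exact h
  -- q = id - R is injective
  have hq_inj : Function.Injective (fun t : ℝ => t - R t) := by
    intro x y hxy
    simp only at hxy
    have ex : (x - R x) + Rt (x - R x) = x := by rw [← hsync₂ x]; ring
    have ey : (y - R y) + Rt (y - R y) = y := by rw [← hsync₂ y]; ring
    calc x = (x - R x) + Rt (x - R x) := ex.symm
      _ = (y - R y) + Rt (y - R y) := by rw [hxy]
      _ = y := ey
  have hq_cont : Continuous (fun t : ℝ => t - R t) := continuous_id.sub hR.continuous
  have hmono : StrictMono (fun t : ℝ => t - R t) := by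
    rcases hq_cont.strictMono_of_inj hq_inj with h | h
    · exact h
    · exfalso
      have hc := hRpos 0
      have ho : R (0 - 2 * ((1 : ℕ) : ℝ) * R 0) = R 0 := orbit 1 0
      have harg : (0 : ℝ) - 2 * ((1 : ℕ) : ℝ) * R 0 = -(2 * R 0) := by push_cast; ring
      rw [harg] at ho
      have hlt : -(2 * R 0) < (0 : ℝ) := by linarith
      have := h hlt
      simp only at this
      rw [ho] at this
      linarith
  -- R is constant
  have hconst : ∀ t : ℝ, R t = R 0 := by
    by_contra hcon
    push_neg at hcon
    obtain ⟨t₁, ht₁⟩ := hcon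
    obtain ⟨p₁, p₂, hp⟩ : ∃ p₁ p₂ : ℝ, R p₁ < R p₂ := by
      rcases (Ne.lt_or_gt ht₁) with h | h
      exacts [⟨t₁, 0, h⟩, ⟨0, t₁, h⟩]
    have hc₀ : 0 < R p₁ := hRpos p₁
    have h1lt : (1 : ℝ) < R p₂ / R p₁ := (one_lt_div hc₀).mpr hp
    obtain ⟨ξ, hξirr, hξ1, hξ2⟩ := exists_irrational_btwn h1lt
    have hv1 : R p₁ < R p₁ * ξ := by nlinarith
    have hv2 : R p₁ * ξ < R p₂ := by
      have := (lt_div_iff₀ hc₀).mp hξ2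
      linarith [this]
    obtain ⟨p₃, -, hp₃⟩ : ∃ p₃ ∈ Set.uIcc p₁ p₂, R p₃ = R p₁ * ξ := by
      have hIVT := intermediate_value_uIcc (hR.continuous.continuousOn (s := Set.uIcc p₁ p₂))
      have hvmem : R p₁ * ξ ∈ Set.uIcc (R p₁) (R p₂) :=
        Set.mem_uIcc.mpr (Or.inl ⟨hv1.le, hv2.le⟩)
      obtain ⟨p₃, hmem, hval⟩ := hIVT hvmem
      exact ⟨p₃, hmem, hval⟩
    have hirr2 : Irrational ((2 * (R p₁ * ξ)) / (2 * R p₁)) := by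
      have heq : (2 * (R p₁ * ξ)) / (2 * R p₁) = ξ := by
        field_simp
      rw [heq]; exact hξirr
    obtain ⟨n, m, hlow, hhigh⟩ := nat_comb_dense (2 * R p₁) (2 * (R p₁ * ξ))
      (p₁ - p₃) (R p₁ * ξ - R p₁) (by linarith) (by nlinarith) hirr2 (by linarith)
    have hx : R (p₁ - 2 * (n : ℝ) * R p₁) = R p₁ := orbit n p₁
    have hy : R (p₃ - 2 * (m : ℝ) * (R p₁ * ξ)) = R p₁ * ξ := by
      have h := orbit m p₃
      rw [hp₃] at h
      exact h
    have hxy : p₁ - 2 * (n : ℝ) * R p₁ < p₃ - 2 * (m : ℝ) * (R p₁ * ξ) := by nlinarith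
    have hlt := hmono hxy
    simp only at hlt
    rw [hx, hy] at hlt
    nlinarith
  refine ⟨R 0, hRpos 0, hconst, fun t => ?_⟩
  rw [hsync₁ t, hconst]
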